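/- For u ∈ S_n with u(n) ≠ n, set l := u^{-1}(n). Then ℓ((s_1 s_2 ⋯ s_{n−1}) u) = ℓ(u) + (n−1) − 2(n−l); equivalently, the Seidel shift u↑1 = (s_1⋯s_{n−1})u has length ℓ(u) + 2l − n − 1. -/

import Mathlib

open Fin.NatCast

/-- The adjacent transposition `s_i = (i, i+1)` of `S_n` (for `1 ≤ i ≤ n-1`),
realized as a permutation of `Fin n` using 0-indexed positions: it swaps
positions `i-1` and `i`. -/
def s (n : ℕ) [NeZero n] (i : ℕ) : Equiv.Perm (Fin n) :=
  Equiv.swap ((i - 1 : ℕ) : Fin n) ((i : ℕ) : Fin n)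

/-- The product `s_1 s_2 ⋯ s_{n-1}`, taken left to right. -/
def c (n : ℕ) [NeZero n] : Equiv.Perm (Fin n) :=
  ((List.range (n - 1)).map (fun i => s n (i + 1))).prod

/-- The inversion number (Coxeter length) of a permutation of `Fin n`. -/
def len {n : ℕ} (u : Equiv.Perm (Fin n)) : ℕ :=
  (Finset.univ.filter (fun p : Fin n × Fin n => p.1 < p.2 ∧ u p.2 < u p.1)).card

private def cpart (n : ℕ) [NeZero n] (m : ℕ) : Equiv.Perm (Fin n) :=
  ((List.range m).map (fun i => s n (i + 1))).prod

private lemma cpart_apply (n : ℕ) [NeZero n] (m : ℕ) : m ≤ n - 1 → ∀ x : Fin n,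
    ((cpart n m x : Fin n) : ℕ) =
      if x.val < m then x.val + 1 else if x.val = m then 0 else x.val := by
  induction m with
  | zero =>
    intro _ x
    simp [cpart]
  | succ m ih =>
    intro hm x
    have hn : 0 < n := Nat.pos_of_ne_zero (NeZero.ne n)
    have hm1 : m < n := by omega
    have hm2 : m + 1 < n := by omega
    have hstep : cpart n (m + 1) = cpart n m * s n (m + 1) := by
      simp [cpart, List.range_succ]
    have hsw : s n (m + 1) = Equiv.swap ((m : ℕ) : Fin n) ((m + 1 : ℕ) : Fin n) := by
      simp [s]
    have hvm : (((m : ℕ) : Fin n) : ℕ) = m := Fin.val_cast_of_lt hm1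
    have hvm1 : (((m + 1 : ℕ) : Fin n) : ℕ) = m + 1 := Fin.val_cast_of_lt hm2
    have ihh := ih (by omega)
    rw [hstep]
    simp only [Equiv.Perm.mul_apply, hsw]
    by_cases hxm : x.val = m
    · have hx : x = ((m : ℕ) : Fin n) := Fin.ext (by rw [hvm, hxm])
      rw [hx, Equiv.swap_apply_left, ihh, hvm1, hvm]
      split_ifs <;> omega
    · by_cases hxm1 : x.val = m + 1
      · have hx : x = ((m + 1 : ℕ) : Fin n) := Fin.ext (by rw [hvm1, hxm1])
        rw [hx, Equiv.swap_apply_right, ihh, hvm, hvm1]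
        split_ifs <;> omega
      · have hne1 : x ≠ ((m : ℕ) : Fin n) := fun h => hxm (by rw [h, hvm])
        have hne2 : x ≠ ((m + 1 : ℕ) : Fin n) := fun h => hxm1 (by rw [h, hvm1])
        rw [Equiv.swap_apply_of_ne_of_ne hne1 hne2, ihh x]
        split_ifs <;> omega

private lemma c_apply (n : ℕ) [NeZero n] (x : Fin n) :
    ((c n x : Fin n) : ℕ) = if x.val < n - 1 then x.val + 1 else 0 := by
  have h : c n = cpart n (n - 1) := rfl
  have hx := x.isLt
  have := cpart_apply n (n - 1) le_rfl x
  rw [h, this]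
  split_ifs <;> omega

private lemma c_lt (n : ℕ) [NeZero n] (a b : Fin n) :
    c n a < c n b ↔ (b.val < n - 1 ∧ (a.val < b.val ∨ a.val = n - 1)) := by
  have ha := c_apply n a
  have hb := c_apply n b
  have ha' := a.isLt
  have hb' := b.isLt
  rw [Fin.lt_def, ha, hb]
  split_ifs <;> omega

/-- If `u(n) ≠ n` and `l = u⁻¹(n)`, then
`ℓ((s_1 ⋯ s_{n-1}) u) = ℓ(u) + (n-1) − 2(n−l)`. -/
theorem stmt12 (n : ℕ) [NeZero n] (u : Equiv.Perm (Fin n))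
    (hu : u ((n - 1 : ℕ) : Fin n) ≠ ((n - 1 : ℕ) : Fin n))
    (l : ℕ) (hl1 : 1 ≤ l) (hl2 : l ≤ n - 1)
    (hl : ((u⁻¹ ((n - 1 : ℕ) : Fin n) : Fin n) : ℕ) = l - 1) :
    (len (c n * u) : ℤ) = (len u : ℤ) + ((n : ℤ) - 1) - 2 * ((n : ℤ) - l) := by
  have hn : 0 < n := Nat.pos_of_ne_zero (NeZero.ne n)
  set L : Fin n := ((n - 1 : ℕ) : Fin n) with hL
  set P : Fin n := u⁻¹ L with hP
  have hLval : (L : ℕ) = n - 1 := Fin.val_cast_of_lt (by omega)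
  have huP : u P = L := u.apply_symm_apply L
  -- characterization of value n-1
  have hval : ∀ j : Fin n, (u j).val = n - 1 ↔ j = P := by
    intro j
    constructor
    · intro h
      have : u j = L := Fin.ext (by rw [h, hLval])
      rw [hP, ← this, ← Equiv.Perm.mul_apply, inv_mul_cancel, Equiv.Perm.one_apply]
    · intro h; rw [h, huP, hLval]
  -- the three sets
  set S1 : Finset (Fin n × Fin n) :=
    Finset.univ.filter
      (fun p : Fin n × Fin n => p.1 < p.2 ∧ (u p.2).val < (u p.1).val ∧ (u p.1).val ≠ n - 1)
    with hS1
  set S2 : Finset (Fin n × Fin n) :=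
    Finset.univ.filter (fun p : Fin n × Fin n => p.1 < p.2 ∧ p.2 = P) with hS2
  set S3 : Finset (Fin n × Fin n) :=
    Finset.univ.filter (fun p : Fin n × Fin n => p.1 < p.2 ∧ p.1 = P) with hS3
  -- decomposition of len u
  have hu_dec : len u = S1.card + S3.card := by
    have hsplit : (Finset.univ.filter
        (fun p : Fin n × Fin n => p.1 < p.2 ∧ u p.2 < u p.1)) = S1 ∪ S3 := by
      rw [hS1, hS3, ← Finset.filter_or]
      apply Finset.filter_congr
      intro p _
      have h1 := (u p.1).isLt
      have h2 := (u p.2).isLt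
      have hv1 := hval p.1
      have hv2 := hval p.2
      rw [Fin.lt_def]
      constructor
      · rintro ⟨hlt, hinv⟩
        by_cases hc : (u p.1).val = n - 1
        · exact Or.inr ⟨hlt, hv1.mp hc⟩
        · exact Or.inl ⟨hlt, hinv, hc⟩
      · rintro (⟨hlt, hinv, _⟩ | ⟨hlt, hp1⟩)
        · exact ⟨hlt, hinv⟩
        · refine ⟨hlt, ?_⟩
          have h1' : (u p.1).val = n - 1 := hv1.mpr hp1
          have h2' : (u p.2).val ≠ n - 1 := by
            intro h
            have h2p : p.2 = P := hv2.mp h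
            have : p.1 = p.2 := by rw [hp1, h2p]
            exact absurd this (ne_of_lt hlt)
          omega
    have hdisj : Disjoint S1 S3 := by
      rw [Finset.disjoint_left]
      intro p hp1 hp3
      rw [hS1, Finset.mem_filter] at hp1
      rw [hS3, Finset.mem_filter] at hp3
      exact hp1.2.2.2 ((hval p.1).mpr hp3.2.2)
    rw [len, hsplit, Finset.card_union_of_disjoint hdisj]
  -- decomposition of len (c n * u)
  have hcu_dec : len (c n * u) = S1.card + S2.card := by
    have hsplit : (Finset.univ.filter
        (fun p : Fin n × Fin n => p.1 < p.2 ∧ (c n * u) p.2 < (c n * u) p.1)) = S1 ∪ S2 := by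
      rw [hS1, hS2, ← Finset.filter_or]
      apply Finset.filter_congr
      intro p _
      simp only [Equiv.Perm.mul_apply]
      rw [c_lt]
      have h1 := (u p.1).isLt
      have h2 := (u p.2).isLt
      have hv1 := hval p.1
      have hv2 := hval p.2
      constructor
      · rintro ⟨hlt, hb, (h | h)⟩
        · exact Or.inl ⟨hlt, h, by omega⟩
        · exact Or.inr ⟨hlt, hv2.mp h⟩
      · rintro (⟨hlt, hinv, hne⟩ | ⟨hlt, hp2⟩)
        · refine ⟨hlt, by omega, Or.inl hinv⟩
        · have h2' : (u p.2).val = n - 1 := hv2.mpr hp2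
          have h1' : (u p.1).val ≠ n - 1 := by
            intro h
            have h1p : p.1 = P := hv1.mp h
            have : p.1 = p.2 := by rw [h1p, hp2]
            exact absurd this (ne_of_lt hlt)
          exact ⟨hlt, by omega, Or.inr h2'⟩
    have hdisj : Disjoint S1 S2 := by
      rw [Finset.disjoint_left]
      intro p hp1 hp2
      rw [hS1, Finset.mem_filter] at hp1
      rw [hS2, Finset.mem_filter] at hp2
      have h2' : (u p.2).val = n - 1 := (hval p.2).mpr hp2.2.2
      have h1 := (u p.1).isLt
      omega
    rw [len, hsplit, Finset.card_union_of_disjoint hdisj]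
  -- cardinalities of S2, S3
  have hS2card : S2.card = l - 1 := by
    have : S2 = (Finset.Iio P).map
        ⟨fun i => (i, P), fun a b h => (Prod.mk.injEq _ _ _ _ ▸ h).1⟩ := by
      ext p
      simp only [hS2, Finset.mem_filter, Finset.mem_univ, true_and, Finset.mem_map,
        Finset.mem_Iio, Function.Embedding.coeFn_mk]
      constructor
      · rintro ⟨h1, h2⟩
        exact ⟨p.1, h2 ▸ h1, by rw [← h2]; rfl⟩
      · rintro ⟨a, ha, hp⟩
        rw [← hp]
        exact ⟨ha, rfl⟩
    rw [this, Finset.card_map, Fin.card_Iio, hl]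
  have hS3card : S3.card = n - l := by
    have : S3 = (Finset.Ioi P).map
        ⟨fun j => (P, j), fun a b h => (Prod.mk.injEq _ _ _ _ ▸ h).2⟩ := by
      ext p
      simp only [hS3, Finset.mem_filter, Finset.mem_univ, true_and, Finset.mem_map,
        Finset.mem_Ioi, Function.Embedding.coeFn_mk]
      constructor
      · rintro ⟨h1, h2⟩
        exact ⟨p.2, h2 ▸ h1, by rw [← h2]; rfl⟩
      · rintro ⟨a, ha, hp⟩
        rw [← hp]
        exact ⟨ha, rfl⟩
    rw [this, Finset.card_map, Fin.card_Ioi, hl]; omega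
  rw [hu_dec, hcu_dec, hS2card, hS3card]
  push_cast
  omega
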